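/- There exists a critical offspring distribution ξ (E[ξ]=1, σ²=Var(ξ)<∞, P(ξ=0)>0, P(ξ=1)>0) and n, k with E[W_k(T_n)] > 1 + kσ², where T_n is the Galton–Watson tree conditioned on n vertices. -/

import Mathlib

/-- Rooted ordered (plane) trees in which every vertex has at most two children. -/
inductive BTree where
  | leaf : BTree
  | one  : BTree → BTree
  | two  : BTree → BTree → BTree
deriving DecidableEq

namespace BTree

/-- Number of vertices. -/
def size : BTree → ℕ
  | leaf => 1
  | one t => 1 + size t
  | two s t => 1 + size s + size t

/-- The Galton–Watson probability of a finite tree: the product over all vertices v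
of p_{d(v)}, where d(v) is the outdegree of v. -/
noncomputable def gwProb (p : ℕ → ℝ) : BTree → ℝ
  | leaf => p 0
  | one t => p 1 * gwProb p t
  | two s t => p 2 * gwProb p s * gwProb p t

/-- `W k t` is the number of vertices of `t` at distance `k` from the root (the profile). -/
def W : ℕ → BTree → ℕ
  | 0, _ => 1
  | _+1, leaf => 0
  | k+1, one t => W k t
  | k+1, two s t => W k s + W k t

end BTree

/-- The offspring distribution p₀ = (1-ε)/2, p₁ = ε, p₂ = (1-ε)/2. -/
noncomputable def offspring (ε : ℝ) : ℕ → ℝ :=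
  fun n => if n = 0 then (1 - ε) / 2 else if n = 1 then ε else if n = 2 then (1 - ε) / 2 else 0

open BTree

lemma BTree.one_le_size (t : BTree) : 1 ≤ size t := by
  cases t <;> simp [size] <;> omega

lemma BTree.size_eq_two (t : BTree) (h : size t = 2) : t = one leaf := by
  cases t with
  | leaf => simp [size] at h
  | one s =>
    have := one_le_size s
    have hs : size s = 1 := by simp [size] at h; omega
    cases s with
    | leaf => rfl
    | one u => have := one_le_size u; simp [size] at hs; omega
    | two u v => have := one_le_size u; have := one_le_size v; simp [size] at hs; omega
  | two s u =>
    have := one_le_size s; have := one_le_size u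
    simp [size] at h; omega

lemma BTree.size_eq_three (t : BTree) (h : size t = 3) :
    t = one (one leaf) ∨ t = two leaf leaf := by
  cases t with
  | leaf => simp [size] at h
  | one s =>
    left
    have hs : size s = 2 := by simp [size] at h; omega
    rw [size_eq_two s hs]
  | two s u =>
    right
    have h1 := one_le_size s; have h2 := one_le_size u
    have hs : size s = 1 ∧ size u = 1 := by simp [size] at h; omega
    have e1 : s = leaf := by
      cases s with
      | leaf => rfl
      | one a => have := one_le_size a; simp [size] at hs; omega
      | two a b => have := one_le_size a; have := one_le_size b; simp [size] at hs; omega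
    have e2 : u = leaf := by
      cases u with
      | leaf => rfl
      | one a => have := one_le_size a; simp [size] at hs; omega
      | two a b => have := one_le_size a; have := one_le_size b; simp [size] at hs; omega
    rw [e1, e2]

lemma tsum_size_three (f : BTree → ℝ) :
    (∑' t : BTree, if size t = 3 then f t else 0)
      = f (one (one leaf)) + f (two leaf leaf) := by
  have hne : (one (one leaf) : BTree) ≠ two leaf leaf := by simp
  have hsum := tsum_eq_sum (L := SummationFilter.unconditional BTree) (f := fun t : BTree => if size t = 3 then f t else 0)
    (s := ({one (one leaf), two leaf leaf} : Finset BTree)) ?_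
  · rw [hsum, Finset.sum_pair hne]
    simp [size]
  · intro t ht
    by_cases h3 : size t = 3
    · exfalso
      rcases BTree.size_eq_three t h3 with h | h <;> simp [h] at ht
    · simp [h3]

/-- E[W_k(T_n)]: the expectation of the number of vertices at distance `k` from the root
of the Galton–Watson tree with offspring distribution `p` conditioned to have `n` vertices. -/
noncomputable def condExpW (p : ℕ → ℝ) (n k : ℕ) : ℝ :=
  (∑' t : BTree, if size t = n then gwProb p t * (W k t : ℝ) else 0) /
    (∑' t : BTree, if size t = n then gwProb p t else 0)

/-- There is a critical offspring distribution ξ (supported on {0,1,2}, so with finite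
variance σ² = E[ξ²] - 1 = p₁ + 4p₂ - 1), with P(ξ=0)>0, P(ξ=1)>0, and n, k such that
E[W_k(T_n)] > 1 + kσ². -/
theorem exists_profile_exceeding_limit :
    ∃ (p : ℕ → ℝ) (n k : ℕ), (∀ j, 0 ≤ p j) ∧ (∀ j, 3 ≤ j → p j = 0) ∧
      p 0 + p 1 + p 2 = 1 ∧ 0 < p 0 ∧ 0 < p 1 ∧
      p 1 + 2 * p 2 = 1 ∧   -- E[ξ] = 1 (criticality)
      condExpW p n k > 1 + (k : ℝ) * (p 1 + 4 * p 2 - 1) := by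
  refine ⟨offspring (1/10), 3, 1, ?_, ?_, ?_, ?_, ?_, ?_, ?_⟩
  · intro j; unfold offspring; split_ifs <;> norm_num
  · intro j hj
    unfold offspring
    have h0 : j ≠ 0 := by omega
    have h1 : j ≠ 1 := by omega
    have h2 : j ≠ 2 := by omega
    simp [h0, h1, h2]
  · norm_num [offspring]
  · norm_num [offspring]
  · norm_num [offspring]
  · norm_num [offspring]
  · unfold condExpW
    rw [tsum_size_three, tsum_size_three]
    simp only [gwProb, W, offspring]
    norm_num
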